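/- Let P, Q* be symmetric positive definite matrices, let A_k be a matrix satisfying the Lyapunov equation A_kᵀP + PA_k = −Q*, and let φ : ℝⁿ → ℝⁿ. Consider the nonlinear vector field f(x) = A_k x + φ(x). If x ≠ 0 and ‖φ(x)‖_P / ‖x‖_P ≤ λ_min(Q̂_P)/4, where Q̂_P = P^{−1/2} Q* P^{−1/2} and λ_min denotes the smallest eigenvalue, then the Lyapunov derivative satisfies ∇V(x) · f(x) ≤ −(1/2) xᵀQ*x, where V(x) = xᵀPx. -/

import Mathlib

open Matrix

noncomputable def Matrix.PosSemidef.sqrt {n : Type*} [Fintype n] [DecidableEq n]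
    {𝕜 : Type*} [RCLike 𝕜] [PartialOrder 𝕜] [StarOrderedRing 𝕜] {A : Matrix n n 𝕜} (hA : A.PosSemidef) : Matrix n n 𝕜 :=
  (hA.1.eigenvectorUnitary : Matrix n n 𝕜) * diagonal ((↑) ∘ (√·) ∘ hA.1.eigenvalues) *
    (star hA.1.eigenvectorUnitary : Matrix n n 𝕜)

lemma psd_sqrt_transpose_aux {n : ℕ} {P : Matrix (Fin n) (Fin n) ℝ} (hP : P.PosSemidef) :
    (hP.sqrt)ᵀ = hP.sqrt := by
  have h : ∀ M : Matrix (Fin n) (Fin n) ℝ, star M = Mᵀ := fun M => rfl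
  simp only [Matrix.PosSemidef.sqrt, Unitary.coe_star, h, transpose_mul, transpose_transpose,
    diagonal_transpose, mul_assoc]

lemma psd_sqrt_mul_self_aux {n : ℕ} {P : Matrix (Fin n) (Fin n) ℝ} (hP : P.PosSemidef) :
    hP.sqrt * hP.sqrt = P := by
  have hU : (star hP.1.eigenvectorUnitary : Matrix (Fin n) (Fin n) ℝ) *
      (hP.1.eigenvectorUnitary : Matrix (Fin n) (Fin n) ℝ) = 1 := by
    exact (Matrix.mem_unitaryGroup_iff').mp hP.1.eigenvectorUnitary.2
  conv_rhs => rw [hP.1.spectral_theorem, Unitary.conjStarAlgAut_apply]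
  simp only [Matrix.PosSemidef.sqrt]
  rw [show ∀ a b c d e f : Matrix (Fin n) (Fin n) ℝ, a * b * c * (d * e * f) = a * (b * (c * d) * e) * f
    from fun a b c d e f => by simp only [mul_assoc], hU, mul_one, diagonal_mul_diagonal]
  congr 3
  funext i
  simp [Real.mul_self_sqrt (hP.eigenvalues_nonneg i)]


lemma rayleigh_min_aux {n : ℕ} [NeZero n] {M : Matrix (Fin n) (Fin n) ℝ} (hM : M.IsHermitian)
    (y : Fin n → ℝ) : (⨅ i, hM.eigenvalues i) * (y ⬝ᵥ y) ≤ y ⬝ᵥ M *ᵥ y := by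
  classical
  set V : Matrix (Fin n) (Fin n) ℝ := (hM.eigenvectorUnitary : Matrix (Fin n) (Fin n) ℝ) with hV
  have hVstar : star V = Vᵀ := rfl
  have hunit : V * Vᵀ = 1 := by
    have := (Matrix.mem_unitaryGroup_iff).mp hM.eigenvectorUnitary.2
    exact this
  set z : Fin n → ℝ := Vᵀ *ᵥ y with hz
  have hzV : z ᵥ* Vᵀ = y := by
    rw [hz, mulVec_transpose, vecMul_vecMul, hunit, vecMul_one]
  have hyz : y ⬝ᵥ y = z ⬝ᵥ z := by
    conv_rhs => rw [hz]
    rw [dotProduct_mulVec, hzV]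
  have hMy : y ⬝ᵥ M *ᵥ y = ∑ i, hM.eigenvalues i * z i ^ 2 := by
    have h1 : y ⬝ᵥ M *ᵥ y = z ⬝ᵥ (diagonal (RCLike.ofReal ∘ hM.eigenvalues)) *ᵥ z := by
      conv_lhs => rw [hM.spectral_theorem, Unitary.conjStarAlgAut_apply]
      rw [hVstar, ← hV, ← mulVec_mulVec, ← mulVec_mulVec, ← hz, dotProduct_mulVec,
        ← mulVec_transpose, ← hz]
    rw [h1]
    simp only [dotProduct, mulVec_diagonal, Function.comp_apply, RCLike.ofReal_real_eq_id, id_eq]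
    exact Finset.sum_congr rfl fun i _ => by ring
  rw [hMy, hyz]
  have hb : BddBelow (Set.range hM.eigenvalues) := Set.Finite.bddBelow (Set.finite_range _)
  calc (⨅ i, hM.eigenvalues i) * (z ⬝ᵥ z) = ∑ i, (⨅ j, hM.eigenvalues j) * z i ^ 2 := by
        simp [dotProduct, Finset.mul_sum, pow_two]
    _ ≤ ∑ i, hM.eigenvalues i * z i ^ 2 := by
        apply Finset.sum_le_sum
        intro i _
        exact mul_le_mul_of_nonneg_right (ciInf_le hb i) (sq_nonneg _)


/-- Core inequality of Lemma 1: if the linearization error `φ` is small in the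
weighted norm relative to `x`, namely
`‖φ(x)‖_P / ‖x‖_P ≤ λ_min(P^{-1/2} Q* P^{-1/2}) / 4`, then the Lyapunov
derivative of `V(x) = xᵀPx` along `f(x) = A_k x + φ(x)` satisfies
`∇V(x)·f(x) = 2 xᵀ P f(x) ≤ −(1/2) xᵀ Q* x`. -/
theorem lyapunov_decrease_nonlinear {n : ℕ} [NeZero n]
    (Ak P Qs : Matrix (Fin n) (Fin n) ℝ)
    (hP : P.PosDef) (hQs : Qs.PosDef)
    (hLyap : Akᵀ * P + P * Ak = -Qs)
    (hQhat : ((hP.posSemidef.sqrt)⁻¹ * Qs * (hP.posSemidef.sqrt)⁻¹).IsHermitian)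
    (φ : (Fin n → ℝ) → (Fin n → ℝ)) (x : Fin n → ℝ) (hx : x ≠ 0)
    (hsmall : Real.sqrt (φ x ⬝ᵥ P.mulVec (φ x)) / Real.sqrt (x ⬝ᵥ P.mulVec x) ≤
      (⨅ i, hQhat.eigenvalues i) / 4) :
    2 * (x ⬝ᵥ P.mulVec (Ak.mulVec x + φ x)) ≤ -(1/2) * (x ⬝ᵥ Qs.mulVec x) := by
  classical
  set S := hP.posSemidef.sqrt with hS
  have hSsym : Sᵀ = S := psd_sqrt_transpose_aux hP.posSemidef
  have hSS : S * S = P := psd_sqrt_mul_self_aux hP.posSemidef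
  have hdet : IsUnit S.det := by
    have h : S.det * S.det = P.det := by rw [← det_mul, hSS]
    have := hP.det_pos
    apply isUnit_iff_ne_zero.2
    intro h0
    rw [h0, mul_zero] at h
    exact (ne_of_gt this) h.symm
  have hinvS : S⁻¹ * S = 1 := nonsing_inv_mul S hdet
  have hSinvT : (S⁻¹)ᵀ = S⁻¹ := by rw [transpose_nonsing_inv, hSsym]
  -- key identity (1)
  have key : ∀ u v : Fin n → ℝ, u ⬝ᵥ P *ᵥ v = (S *ᵥ u) ⬝ᵥ (S *ᵥ v) := by
    intro u v
    rw [← hSS, ← mulVec_mulVec, dotProduct_mulVec, ← mulVec_transpose, hSsym]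
  set y := S *ᵥ x with hy
  set z := S *ᵥ φ x with hzdef
  -- (2) congruence of quadratic forms
  have hPT : Pᵀ = P := hP.posSemidef.1
  have hyS : y ᵥ* S⁻¹ = x := by
    rw [hy, ← mulVec_transpose, hSinvT, mulVec_mulVec, hinvS, one_mulVec]
  have hQcong : x ⬝ᵥ Qs *ᵥ x = y ⬝ᵥ (S⁻¹ * Qs * S⁻¹) *ᵥ y := by
    have e1 : (S⁻¹ * Qs * S⁻¹) *ᵥ y = (S⁻¹ * Qs) *ᵥ x := by
      rw [hy, mulVec_mulVec, mul_assoc (S⁻¹ * Qs), hinvS, mul_one]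
    conv_rhs => rw [e1, ← mulVec_mulVec, dotProduct_mulVec, hyS]
  -- (3) Lyapunov identity
  have hLy : 2 * (x ⬝ᵥ P *ᵥ (Ak *ᵥ x)) = -(x ⬝ᵥ Qs *ᵥ x) := by
    have h1 : x ⬝ᵥ (Akᵀ * P + P * Ak) *ᵥ x = -(x ⬝ᵥ Qs *ᵥ x) := by
      rw [hLyap, neg_mulVec, dotProduct_neg]
    have h2 : x ⬝ᵥ (Akᵀ * P) *ᵥ x = x ⬝ᵥ P *ᵥ (Ak *ᵥ x) := by
      rw [← mulVec_mulVec, dotProduct_mulVec, ← mulVec_transpose, transpose_transpose,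
        dotProduct_mulVec, ← mulVec_transpose, hPT, dotProduct_comm]
    have h3 : x ⬝ᵥ (P * Ak) *ᵥ x = x ⬝ᵥ P *ᵥ (Ak *ᵥ x) := by
      rw [← mulVec_mulVec]
    rw [add_mulVec, dotProduct_add, h2, h3] at h1
    linarith
  -- positivity
  have hyy_pos : 0 < y ⬝ᵥ y := by
    rw [← key x x]
    have := hP.dotProduct_mulVec_pos hx
    simpa using this
  have hyy_nonneg : 0 ≤ y ⬝ᵥ y := le_of_lt hyy_pos
  have hsy_pos : 0 < Real.sqrt (y ⬝ᵥ y) := Real.sqrt_pos.2 hyy_pos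
  set lam := ⨅ i, hQhat.eigenvalues i with hlam
  -- rewrite hsmall
  have hsmall' : Real.sqrt (z ⬝ᵥ z) ≤ lam / 4 * Real.sqrt (y ⬝ᵥ y) := by
    have h := hsmall
    rw [key (φ x) (φ x), key x x] at h
    exact (div_le_iff₀ hsy_pos).1 h
  -- Cauchy-Schwarz
  have hcs : y ⬝ᵥ z ≤ Real.sqrt (y ⬝ᵥ y) * Real.sqrt (z ⬝ᵥ z) := by
    have := Real.sum_mul_le_sqrt_mul_sqrt Finset.univ y z
    simpa [dotProduct, sq] using this
  have hzz_nonneg : 0 ≤ Real.sqrt (z ⬝ᵥ z) := Real.sqrt_nonneg _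
  have hbound : y ⬝ᵥ z ≤ lam / 4 * (y ⬝ᵥ y) := by
    calc y ⬝ᵥ z ≤ Real.sqrt (y ⬝ᵥ y) * Real.sqrt (z ⬝ᵥ z) := hcs
      _ ≤ Real.sqrt (y ⬝ᵥ y) * (lam / 4 * Real.sqrt (y ⬝ᵥ y)) :=
          mul_le_mul_of_nonneg_left hsmall' (le_of_lt hsy_pos)
      _ = lam / 4 * (Real.sqrt (y ⬝ᵥ y) * Real.sqrt (y ⬝ᵥ y)) := by ring
      _ = lam / 4 * (y ⬝ᵥ y) := by rw [Real.mul_self_sqrt hyy_nonneg]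
  -- Rayleigh
  have hray : lam * (y ⬝ᵥ y) ≤ x ⬝ᵥ Qs *ᵥ x := by
    rw [hQcong]
    exact rayleigh_min_aux hQhat y
  -- assemble
  have hxPφ : x ⬝ᵥ P *ᵥ φ x = y ⬝ᵥ z := key x (φ x)
  rw [mulVec_add, dotProduct_add]
  rw [mul_add, hLy, hxPφ]
  linarith
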